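/- arXiv:2410.19105 — 3 statements merged into one kernel-verified Lean document; each statement's English description precedes it below -/
import Mathlib

section
/- Simulation-based calibration uniformity (continuous limit): if θ* ~ p(θ), X ~ p(X|θ*), and θ̃ ~ p(θ|X) is drawn from the exact posterior, and if the conditional CDF F_X(u) = P(θ̃_j ≤ u | X) is continuous for every X, then the random variable U = F_X(θ*_j) is uniformly distributed on [0,1], for each coordinate j. -/
open MeasureTheory ProbabilityTheory

lemma pit_key (μ : Measure ℝ) [IsProbabilityMeasure μ]
    (hcont : Continuous fun u => (μ (Set.Iic u)).toReal)
    {t : ℝ} (ht : t ∈ Set.Icc (0 : ℝ) 1) :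
    μ {u | (μ (Set.Iic u)).toReal ≤ t} = ENNReal.ofReal t := by
  set F : ℝ → ℝ := fun u => (μ (Set.Iic u)).toReal with hF
  have hmono : Monotone F := fun a b hab =>
    ENNReal.toReal_mono (measure_ne_top μ _) (measure_mono (Set.Iic_subset_Iic.2 hab))
  have htop : Filter.Tendsto F Filter.atTop (nhds 1) := by
    have h1 := tendsto_measure_Iic_atTop (μ := μ)
    have h2 := (ENNReal.tendsto_toReal (a := μ Set.univ) (measure_ne_top μ _)).comp h1
    simp only [measure_univ, ENNReal.toReal_one] at h2; exact h2
  have hFcdf : F = ProbabilityTheory.cdf μ := funext fun u => (cdf_eq_real μ u).symm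
  have hbot : Filter.Tendsto F Filter.atBot (nhds 0) := by
    rw [hFcdf]; exact tendsto_cdf_atBot μ
  set A : Set ℝ := {u | F u ≤ t} with hA
  rcases A.eq_empty_or_nonempty with hAe | hAne
  · have hlt : ∀ u, t ≤ F u := by
      intro u
      by_contra h
      have hmem : F u ≤ t := le_of_not_ge h
      exact (Set.eq_empty_iff_forall_notMem.1 hAe u) hmem
    have ht0 : t ≤ 0 := ge_of_tendsto hbot (Filter.Eventually.of_forall hlt)
    have : t = 0 := le_antisymm ht0 ht.1
    rw [hAe, this]
    simp
  · by_cases hbdd : BddAbove A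
    · set s := sSup A with hs
      have hclosed : IsClosed A := isClosed_le hcont continuous_const
      have hsA : s ∈ A := hclosed.csSup_mem hAne hbdd
      have hAeq : A = Set.Iic s := by
        apply Set.Subset.antisymm
        · intro u hu; exact le_csSup hbdd hu
        · intro u hu; exact le_trans (hmono hu) hsA
      have hFs_le : F s ≤ t := hsA
      have hFs_ge : t ≤ F s := by
        have htend : Filter.Tendsto F (nhdsWithin s (Set.Ioi s)) (nhds (F s)) :=
          (hcont.tendsto s).mono_left nhdsWithin_le_nhds
        refine ge_of_tendsto htend ?_
        filter_upwards [self_mem_nhdsWithin] with u hu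
        by_contra h
        have hmem : F u ≤ t := le_of_not_ge h
        have : u ∈ A := hmem
        rw [hAeq] at this
        exact absurd (Set.mem_Iic.1 this) (not_le.2 hu)
      have hFs : F s = t := le_antisymm hFs_le hFs_ge
      rw [hAeq]
      have : μ (Set.Iic s) = ENNReal.ofReal (F s) := by
        rw [hF]
        exact (ENNReal.ofReal_toReal (measure_ne_top μ _)).symm
      rw [this, hFs]
    · have hAall : A = Set.univ := by
        ext u
        simp only [Set.mem_univ, iff_true]
        obtain ⟨a, haA, ha⟩ := not_bddAbove_iff.1 hbdd u
        exact le_trans (hmono ha.le) haA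
      have h1t : (1 : ℝ) ≤ t := by
        refine le_of_tendsto htop (Filter.Eventually.of_forall fun u => ?_)
        have : u ∈ A := hAall ▸ Set.mem_univ u
        exact this
      have : t = 1 := le_antisymm ht.2 h1t
      rw [hAall, this]
      simp [measure_univ]

/-- SBC uniformity, continuous limit: if `κ` is the conditional
distribution of the (exact posterior) draw `θ̃_j` given `X`, so that the joint law
of `(X, θ*_j)` is `law(X) ⊗ₘ κ`, and the conditional CDF `u ↦ κ(X)(-∞, u]` is
continuous for every `X`, then `U = F_X(θ*_j)` is uniform on `[0,1]`. -/
theorem stmt_5 {Ω 𝒳 : Type*} [MeasurableSpace Ω] [MeasurableSpace 𝒳]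
    (P : Measure Ω) [IsProbabilityMeasure P]
    (X : Ω → 𝒳) (θj : Ω → ℝ) (hX : Measurable X) (hθj : Measurable θj)
    (κ : Kernel 𝒳 ℝ) [IsMarkovKernel κ]
    (hjoint : Measure.map (fun ω => (X ω, θj ω)) P = (Measure.map X P) ⊗ₘ κ)
    (hcont : ∀ x, Continuous (fun u => (κ x (Set.Iic u)).toReal)) :
    ∀ t ∈ Set.Icc (0 : ℝ) 1,
      P {ω | (κ (X ω) (Set.Iic (θj ω))).toReal ≤ t} = ENNReal.ofReal t := by
  intro t ht
  -- joint measurability of (x, u) ↦ κ x (Iic u)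
  have hmeas : Measurable fun p : 𝒳 × ℝ => κ p.1 (Set.Iic p.2) := by
    have h := Kernel.measurable_kernel_prodMk_left
      (κ := κ.comap Prod.fst (measurable_fst : Measurable (Prod.fst : 𝒳 × ℝ → 𝒳)))
      (t := {p : (𝒳 × ℝ) × ℝ | p.2 ≤ p.1.2})
      (measurableSet_le measurable_snd measurable_fst.snd)
    simpa [Kernel.comap_apply, Set.Iic] using h
  have hmeasR : Measurable fun p : 𝒳 × ℝ => (κ p.1 (Set.Iic p.2)).toReal :=
    hmeas.ennreal_toReal
  have hset : MeasurableSet {p : 𝒳 × ℝ | (κ p.1 (Set.Iic p.2)).toReal ≤ t} :=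
    measurableSet_le hmeasR measurable_const
  have hrw : P {ω | (κ (X ω) (Set.Iic (θj ω))).toReal ≤ t}
      = Measure.map (fun ω => (X ω, θj ω)) P
          {p : 𝒳 × ℝ | (κ p.1 (Set.Iic p.2)).toReal ≤ t} := by
    rw [Measure.map_apply (hX.prodMk hθj) hset]
    rfl
  rw [hrw, hjoint, Measure.compProd_apply hset]
  have hpt : ∀ x, κ x (Prod.mk x ⁻¹' {p : 𝒳 × ℝ | (κ p.1 (Set.Iic p.2)).toReal ≤ t})
      = ENNReal.ofReal t := by
    intro x
    have : Prod.mk x ⁻¹' {p : 𝒳 × ℝ | (κ p.1 (Set.Iic p.2)).toReal ≤ t}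
        = {u : ℝ | ((κ x) (Set.Iic u)).toReal ≤ t} := rfl
    rw [this]
    exact pit_key (κ x) (hcont x) ht
  haveI : IsProbabilityMeasure (Measure.map X P) := Measure.isProbabilityMeasure_map hX.aemeasurable
  simp only [hpt]
  simp [lintegral_const, measure_univ]
end

section
/- Normal–inverse-gamma conjugacy for the variance: if σ² ~ InverseGamma(d/2, η/2), μ | σ² ~ N(0, σ²/κ), and given (μ, σ²) the observations X_1,…,X_n are iid N(μ, σ²), then the posterior of (μ, σ²) given the data is again a normal–inverse-gamma distribution with updated parameters κ' = κ + n, μ' = (n X̄)/(κ + n), d' = d + n, and η' = η + Σ_i (X_i − X̄)² + κ n X̄²/(κ + n), where X̄ is the sample mean. -/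
open scoped BigOperators

/-- Inverse-gamma density with shape `a` and scale `b`. -/
noncomputable def invGammaDensity (a b s2 : ℝ) : ℝ :=
  b ^ a / Real.Gamma a * s2 ^ (-(a + 1)) * Real.exp (-b / s2)

/-- Normal density with mean `m` and variance `v`. -/
noncomputable def normalDensity (m v x : ℝ) : ℝ :=
  (2 * Real.pi * v) ^ (-(1 : ℝ) / 2) * Real.exp (-(x - m) ^ 2 / (2 * v))

/-- Normal–inverse-gamma density `NIG(μ₀, κ, d, η)`:
`σ² ~ InverseGamma(d/2, η/2)` and `μ | σ² ~ N(μ₀, σ²/κ)`. -/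
noncomputable def nigDensity (μ0 κ d η μ s2 : ℝ) : ℝ :=
  invGammaDensity (d / 2) (η / 2) s2 * normalDensity μ0 (s2 / κ) μ

lemma nig_form (μ0 κ d η μ s2 : ℝ) (hκ : 0 < κ) (hs2 : 0 < s2) :
    nigDensity μ0 κ d η μ s2
      = ((η/2) ^ (d/2) / Real.Gamma (d/2)) * (2*Real.pi)^(-(1:ℝ)/2) * κ ^ ((1:ℝ)/2)
        * s2 ^ (-(d/2+1) - (1:ℝ)/2) * Real.exp (-(η + κ*(μ-μ0)^2)/(2*s2)) := by
  have hπ : (0:ℝ) < 2*Real.pi := by positivity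
  unfold nigDensity invGammaDensity normalDensity
  have h2 : κ ^ ((-1:ℝ)/2) = (κ ^ ((1:ℝ)/2))⁻¹ := by
    rw [show ((-1:ℝ)/2) = -(1/2) by ring, Real.rpow_neg hκ.le]
  have h1 : (2 * Real.pi * (s2/κ)) ^ (-(1:ℝ)/2)
      = (2*Real.pi)^(-(1:ℝ)/2) * s2 ^ (-(1:ℝ)/2) * κ ^ ((1:ℝ)/2) := by
    rw [Real.mul_rpow hπ.le (by positivity), Real.div_rpow hs2.le hκ.le, h2, div_inv_eq_mul]
    ring
  rw [h1]
  have e1 : s2 ^ (-(d/2+1) - (1:ℝ)/2) = s2 ^ (-(d/2+1)) * s2 ^ (-(1:ℝ)/2) := by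
    rw [← Real.rpow_add hs2]; ring_nf
  have e2 : Real.exp (-(η + κ*(μ-μ0)^2)/(2*s2))
      = Real.exp (-(η/2)/s2) * Real.exp (-(μ-μ0)^2/(2*(s2/κ))) := by
    rw [← Real.exp_add]; congr 1; field_simp; ring
  rw [e1, e2]; ring

lemma lik_form (n : ℕ) (X : Fin n → ℝ) (μ s2 : ℝ) (hs2 : 0 < s2) :
    ∏ i, normalDensity μ s2 (X i)
      = (2*Real.pi)^(-(n:ℝ)/2) * s2 ^ (-(n:ℝ)/2)
        * Real.exp (-(∑ i, (X i - μ)^2)/(2*s2)) := by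
  have hπ : (0:ℝ) < 2*Real.pi := by positivity
  unfold normalDensity
  rw [Finset.prod_mul_distrib, Finset.prod_const, ← Real.exp_sum]
  have h1 : ((2 * Real.pi * s2) ^ (-(1:ℝ)/2)) ^ (Finset.univ : Finset (Fin n)).card
      = (2*Real.pi)^(-(n:ℝ)/2) * s2 ^ (-(n:ℝ)/2) := by
    rw [Finset.card_univ, Fintype.card_fin, ← Real.rpow_natCast ((2*Real.pi*s2) ^ (-(1:ℝ)/2)) n,
      ← Real.rpow_mul (by positivity), Real.mul_rpow hπ.le hs2.le]
    ring_nf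
  rw [h1]
  congr 1
  congr 1
  rw [neg_div, Finset.sum_div, ← Finset.sum_neg_distrib]
  exact Finset.sum_congr rfl (fun i _ => neg_div _ _)

lemma sum_sq_expand (n : ℕ) (X : Fin n → ℝ) (a : ℝ) :
    ∑ i, (X i - a)^2 = ∑ i, (X i)^2 - (2*a)*(∑ i, X i) + n*a^2 := by
  have : ∑ i, (X i - a)^2 = ∑ i, ((X i)^2 - (2*a)*(X i) + a^2) :=
    Finset.sum_congr rfl (fun i _ => by ring)
  rw [this, Finset.sum_add_distrib, Finset.sum_sub_distrib, ← Finset.mul_sum,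
    Finset.sum_const, Finset.card_univ, Fintype.card_fin, nsmul_eq_mul]

/-- normal–inverse-gamma conjugacy: with prior `NIG(0, κ, d, η)`
and iid `N(μ, σ²)` observations `X_1,…,X_n`, the posterior (Bayes: prior ×
likelihood, up to a constant) is `NIG(μ', κ', d', η')` with
`κ' = κ + n`, `μ' = n X̄ / (κ + n)`, `d' = d + n`,
`η' = η + Σ (X_i - X̄)² + κ n X̄² / (κ + n)`. -/
theorem stmt_8 (κ d η : ℝ) (hκ : 0 < κ) (hd : 0 < d) (hη : 0 < η)
    (n : ℕ) (X : Fin n → ℝ) :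
    ∃ c > 0, ∀ μ s2 : ℝ, 0 < s2 →
      nigDensity 0 κ d η μ s2 * ∏ i, normalDensity μ s2 (X i)
        = c * nigDensity
            ((n * ((∑ i, X i) / n)) / (κ + n))
            (κ + n) (d + n)
            (η + ∑ i, (X i - (∑ j, X j) / n) ^ 2
               + κ * n * ((∑ i, X i) / n) ^ 2 / (κ + n))
            μ s2 := by
  have hκn : (0:ℝ) < κ + n := by positivity
  set S : ℝ := ∑ i, X i with hS
  set xb : ℝ := S / n with hxb
  set η' : ℝ := η + (∑ i, (X i - xb)^2) + κ * n * xb^2 / (κ + n) with hη'def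
  have hη' : 0 < η' := by
    have h1 : (0:ℝ) ≤ ∑ i, (X i - xb)^2 := by positivity
    have h2 : (0:ℝ) ≤ κ * n * xb^2 / (κ + n) := by positivity
    rw [hη'def]; linarith
  have hG1 : 0 < Real.Gamma (d/2) := Real.Gamma_pos_of_pos (by linarith)
  have hG2 : 0 < Real.Gamma ((d+n)/2) := Real.Gamma_pos_of_pos (by positivity)
  refine ⟨((η/2)^(d/2) / Real.Gamma (d/2)) / ((η'/2)^((d+(n:ℝ))/2) / Real.Gamma ((d+n)/2))
      * (κ^((1:ℝ)/2) / (κ+n)^((1:ℝ)/2)) * (2*Real.pi)^(-(n:ℝ)/2), by positivity, ?_⟩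
  intro μ s2 hs2
  -- key algebraic identity for the exponent
  have key : ∀ μ : ℝ, η + κ*(μ-0)^2 + ∑ i, (X i - μ)^2
      = η' + (κ+n) * (μ - (n * xb) / (κ + n))^2 := by
    intro μ
    rw [sum_sq_expand, hη'def, sum_sq_expand, hxb]
    rcases Nat.eq_zero_or_pos n with h0 | hpos
    · subst h0
      simp [hS]
    · have hn : (n:ℝ) ≠ 0 := Nat.cast_ne_zero.mpr hpos.ne'
      field_simp
      ring
  have hform := nig_form ((n * xb) / (κ + n)) (κ+n) (d+n) η' μ s2 hκn hs2
  rw [nig_form 0 κ d η μ s2 hκ hs2, lik_form n X μ s2 hs2, hform]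
  have es2 : s2 ^ (-((d+(n:ℝ))/2+1) - (1:ℝ)/2)
      = s2 ^ (-(d/2+1) - (1:ℝ)/2) * s2 ^ (-(n:ℝ)/2) := by
    rw [← Real.rpow_add hs2]; congr 1; ring
  have eexp : Real.exp (-(η' + (κ+n)*(μ - (n * xb) / (κ + n))^2)/(2*s2))
      = Real.exp (-(η + κ*(μ-0)^2)/(2*s2)) * Real.exp (-(∑ i, (X i - μ)^2)/(2*s2)) := by
    rw [← Real.exp_add, ← add_div, ← neg_add, key μ]
  have hc : (η/2)^(d/2) / Real.Gamma (d/2) * κ^((1:ℝ)/2) * (2*Real.pi)^(-(n:ℝ)/2)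
      = (((η/2)^(d/2) / Real.Gamma (d/2)) / ((η'/2)^((d+(n:ℝ))/2) / Real.Gamma ((d+n)/2))
          * (κ^((1:ℝ)/2) / (κ+n)^((1:ℝ)/2)) * (2*Real.pi)^(-(n:ℝ)/2))
        * ((η'/2)^((d+(n:ℝ))/2) / Real.Gamma ((d+n)/2)) * (κ+n)^((1:ℝ)/2) := by
    have hB : (0:ℝ) < (η'/2)^((d+(n:ℝ))/2) := by positivity
    have hK : (0:ℝ) < (κ+n)^((1:ℝ)/2) := by positivity
    field_simp
  rw [es2, eexp]
  linear_combination (s2 ^ (-(d/2+1) - (1:ℝ)/2) * s2 ^ (-(n:ℝ)/2)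
    * Real.exp (-(η + κ*(μ-0)^2)/(2*s2)) * Real.exp (-(∑ i, (X i - μ)^2)/(2*s2))
    * (2*Real.pi)^(-(1:ℝ)/2)) * hc
end

section
/- Monotonicity of the g-and-k quantile transform in z for k ≥ 0 and small skewness: the function Q(z) = a + b(1 + c·tanh(gz/2))(1+z²)^k z is strictly increasing in z ∈ ℝ whenever b > 0, k ≥ 0, and |c| < 1 with |c·g| small enough that 1 + c·tanh(gz/2) + (c g z / 2)·sech²(gz/2) > 0 for all z; in particular Q is strictly increasing when g = 0, b > 0, k ≥ 0. -/
lemma tanh_hasDerivAt (x : ℝ) :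
    HasDerivAt Real.tanh ((1 / Real.cosh x) ^ 2) x := by
  have hc : Real.cosh x ≠ 0 := (Real.cosh_pos x).ne'
  have h : HasDerivAt (fun y => Real.sinh y / Real.cosh y)
      ((Real.cosh x * Real.cosh x - Real.sinh x * Real.sinh x) / (Real.cosh x) ^ 2) x :=
    (Real.hasDerivAt_sinh x).div (Real.hasDerivAt_cosh x) hc
  have key : (Real.cosh x * Real.cosh x - Real.sinh x * Real.sinh x) / (Real.cosh x) ^ 2
      = (1 / Real.cosh x) ^ 2 := by
    have := Real.cosh_sq_sub_sinh_sq x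
    field_simp
    nlinarith [this]
  rw [key] at h
  convert h using 1
  ext y
  rw [Real.tanh_eq_sinh_div_cosh]

lemma abs_tanh_lt_one (x : ℝ) : |Real.tanh x| < 1 := by
  have hc : 0 < Real.cosh x := Real.cosh_pos x
  have h1 : Real.sinh x ^ 2 < Real.cosh x ^ 2 := by
    nlinarith [Real.cosh_sq_sub_sinh_sq x]
  rw [Real.tanh_eq_sinh_div_cosh, abs_div, abs_of_pos hc, div_lt_one hc, abs_lt]
  constructor <;> nlinarith [sq_nonneg (Real.sinh x - Real.cosh x),
    sq_nonneg (Real.sinh x + Real.cosh x)]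

/-- monotonicity of the g-and-k quantile transform: the function
`Q(z) = a + b (1 + c·tanh(gz/2)) (1+z²)^k z` is strictly increasing on `ℝ`
whenever `b > 0`, `k ≥ 0`, `|c| < 1`, and
`1 + c·tanh(gz/2) + (cgz/2)·sech²(gz/2) > 0` for all `z`
(in particular when `g = 0`). -/
theorem stmt_15 (a b g k c : ℝ) (hb : 0 < b) (hk : 0 ≤ k) (hc : |c| < 1)
    (hpos : ∀ z : ℝ,
      0 < 1 + c * Real.tanh (g * z / 2)
          + (c * g * z / 2) * (1 / Real.cosh (g * z / 2)) ^ 2) :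
    StrictMono (fun z : ℝ =>
      a + b * (1 + c * Real.tanh (g * z / 2)) * (1 + z ^ 2) ^ k * z) := by
  set T : ℝ → ℝ := fun z => 1 + c * Real.tanh (g * z / 2) with hTdef
  set T' : ℝ → ℝ := fun z => c * ((1 / Real.cosh (g * z / 2)) ^ 2 * (g / 2)) with hT'def
  set P : ℝ → ℝ := fun z => (1 + z ^ 2) ^ k with hPdef
  set P' : ℝ → ℝ := fun z => k * (1 + z ^ 2) ^ (k - 1) * (2 * z) with hP'def
  have hderiv : ∀ z : ℝ, HasDerivAt
      (fun z : ℝ => a + b * (1 + c * Real.tanh (g * z / 2)) * (1 + z ^ 2) ^ k * z)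
      (b * ((T' z * P z + T z * P' z) * z + T z * P z * 1)) z := by
    intro z
    have h1 : HasDerivAt (fun z : ℝ => g * z / 2) (g / 2) z := by
      simpa using ((hasDerivAt_id z).const_mul g).div_const 2
    have htanh : HasDerivAt (fun z : ℝ => Real.tanh (g * z / 2))
        ((1 / Real.cosh (g * z / 2)) ^ 2 * (g / 2)) z :=
      by have := (tanh_hasDerivAt (g * z / 2)).comp z h1; exact this
    have hT : HasDerivAt T (T' z) z := (htanh.const_mul c).const_add 1
    have hbase : HasDerivAt (fun z : ℝ => 1 + z ^ 2) (2 * z) z := by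
      simpa using ((hasDerivAt_pow 2 z).const_add 1)
    have hP : HasDerivAt P (P' z) z := by
      have hne : (1 : ℝ) + z ^ 2 ≠ 0 := by positivity
      have := (Real.hasDerivAt_rpow_const (x := 1 + z ^ 2) (p := k) (Or.inl hne)).comp z hbase
      simpa [hP'def, hPdef, mul_comm, mul_assoc, Function.comp_def] using this
    have hmain : HasDerivAt (fun z : ℝ => T z * P z * z)
        ((T' z * P z + T z * P' z) * z + T z * P z * 1) z :=
      (hT.mul hP).mul (hasDerivAt_id z)
    have := (hmain.const_mul b).const_add a
    have heq : (fun z : ℝ => a + b * (T z * P z * z))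
        = (fun z : ℝ => a + b * (1 + c * Real.tanh (g * z / 2)) * (1 + z ^ 2) ^ k * z) := by
      funext y; simp only [hTdef, hPdef]; ring
    rw [heq] at this
    exact this
  apply strictMono_of_deriv_pos
  intro z
  rw [(hderiv z).deriv]
  have hT : 0 < T z := by
    have h1 : |c * Real.tanh (g * z / 2)| < 1 := by
      rw [abs_mul]
      calc |c| * |Real.tanh (g * z / 2)| ≤ |c| * 1 :=
            mul_le_mul_of_nonneg_left (abs_tanh_lt_one _).le (abs_nonneg c)
        _ = |c| := mul_one _
        _ < 1 := hc
    have := neg_lt_of_abs_lt h1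
    simp only [hTdef]; linarith
  have hP : 0 < P z := Real.rpow_pos_of_pos (by positivity) k
  have hP1 : 0 < (1 + z ^ 2) ^ (k - 1) := Real.rpow_pos_of_pos (by positivity) (k - 1)
  have key := hpos z
  have h2 : (T' z * P z + T z * P' z) * z + T z * P z * 1
      = P z * (1 + c * Real.tanh (g * z / 2)
          + (c * g * z / 2) * (1 / Real.cosh (g * z / 2)) ^ 2)
        + T z * (k * (1 + z ^ 2) ^ (k - 1)) * (2 * z ^ 2) := by
    simp only [hTdef, hT'def, hPdef, hP'def]
    ring
  rw [h2]
  have hsq : (0:ℝ) ≤ z ^ 2 := sq_nonneg z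
  have hterm2 : 0 ≤ T z * (k * (1 + z ^ 2) ^ (k - 1)) * (2 * z ^ 2) := by positivity
  have hterm1 : 0 < P z * (1 + c * Real.tanh (g * z / 2)
      + (c * g * z / 2) * (1 / Real.cosh (g * z / 2)) ^ 2) := mul_pos hP key
  have hsum : 0 < P z * (1 + c * Real.tanh (g * z / 2)
      + (c * g * z / 2) * (1 / Real.cosh (g * z / 2)) ^ 2)
      + T z * (k * (1 + z ^ 2) ^ (k - 1)) * (2 * z ^ 2) := add_pos_of_pos_of_nonneg hterm1 hterm2
  exact mul_pos hb hsum
end
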